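/- Let d ≥ 1 be an integer and let A ≤ 0 be a real number. For g, z ∈ ℝ^d define Λ_g(z) = (1−4A)^{d/4} · exp(A‖g‖₂² + √(1−4A)·⟨g,z⟩ − ‖z‖₂²/2). Then for all x, y ∈ ℝ^d, the integral of Λ_g(x)·Λ_g(y) with respect to the standard Gaussian measure N(0, I_d) on g equals exp(⟨x,y⟩), i.e. 𝔼_{g∼N(0,I_d)}[Λ_g(x)Λ_g(y)] = exp(⟨x,y⟩). -/

import Mathlib

open MeasureTheory ProbabilityTheory Real RealInnerProductSpace
open scoped ENNReal NNReal

lemma integral_rexp_quad {p : ℝ} (hp : 0 < p) (b : ℝ) :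
    ∫ t : ℝ, Real.exp (-p * t ^ 2 + b * t) =
      Real.sqrt (π / p) * Real.exp (b ^ 2 / (4 * p)) := by
  have h : ∀ t : ℝ, -p * t ^ 2 + b * t =
      -p * (t - b / (2 * p)) ^ 2 + b ^ 2 / (4 * p) := by
    intro t; field_simp; ring
  simp_rw [h, Real.exp_add, integral_mul_const]
  rw [integral_sub_right_eq_self (fun t => Real.exp (-p * t ^ 2)) (b / (2 * p)),
    integral_gaussian]

lemma gauss1d {a : ℝ} (ha : a ≤ 0) (b : ℝ) :
    ∫ t : ℝ, Real.exp (a * t ^ 2 + b * t) ∂(gaussianReal 0 1) =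
      (Real.sqrt (1 - 2 * a))⁻¹ * Real.exp (b ^ 2 / (2 * (1 - 2 * a))) := by
  have hp : 0 < (1 - 2 * a) / 2 := by linarith
  rw [gaussianReal_of_var_ne_zero 0 one_ne_zero,
    (show gaussianPDF 0 1 = fun t => ((gaussianPDFReal 0 1 t).toNNReal : ℝ≥0∞) from rfl),
    integral_withDensity_eq_integral_smul ((measurable_gaussianPDFReal 0 1).real_toNNReal) _]
  have : ∀ t : ℝ, (gaussianPDFReal 0 1 t).toNNReal • Real.exp (a * t ^ 2 + b * t)
      = (Real.sqrt (2 * π))⁻¹ * Real.exp (-((1 - 2 * a) / 2) * t ^ 2 + b * t) := by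
    intro t
    rw [NNReal.smul_def, Real.coe_toNNReal _ (gaussianPDFReal_nonneg 0 1 t)]
    rw [gaussianPDFReal]
    push_cast
    rw [smul_eq_mul, mul_assoc, ← Real.exp_add]
    have h2 : -(t - 0) ^ 2 / (2 * 1) + (a * t ^ 2 + b * t)
        = -((1 - 2 * a) / 2) * t ^ 2 + b * t := by ring
    rw [h2]
    norm_num
  simp_rw [this, integral_const_mul, integral_rexp_quad hp]
  have hq : (0:ℝ) < 1 - 2 * a := by linarith
  rw [show b ^ 2 / (4 * ((1 - 2 * a) / 2)) = b ^ 2 / (2 * (1 - 2 * a)) by ring,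
    show π / ((1 - 2 * a) / 2) = 2 * π / (1 - 2 * a) by rw [div_div_eq_mul_div, mul_comm],
    Real.sqrt_div (by positivity) _]
  have h2π : Real.sqrt (2 * π) ≠ 0 := by positivity
  have hs : Real.sqrt (1 - 2 * a) ≠ 0 := by positivity
  field_simp

noncomputable def stdGaussian (d : ℕ) : Measure (EuclideanSpace ℝ (Fin d)) :=
  (Measure.pi fun _ => gaussianReal 0 1).map (MeasurableEquiv.toLp 2 (Fin d → ℝ))

noncomputable def lambdaRF (d : ℕ) (A : ℝ) (g z : EuclideanSpace ℝ (Fin d)) : ℝ :=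
  (1 - 4 * A) ^ ((d : ℝ) / 4) *
    Real.exp (A * ‖g‖ ^ 2 + Real.sqrt (1 - 4 * A) * ⟪g, z⟫ - ‖z‖ ^ 2 / 2)

theorem stmt_0 (d : ℕ) (hd : 1 ≤ d) (A : ℝ) (hA : A ≤ 0)
    (x y : EuclideanSpace ℝ (Fin d)) :
    ∫ g, lambdaRF d A g x * lambdaRF d A g y ∂(stdGaussian d) =
      Real.exp ⟪x, y⟫ := by
  have h4A : (0:ℝ) < 1 - 4 * A := by linarith
  set s := Real.sqrt (1 - 4 * A) with hsdef
  have hs2 : s ^ 2 = 1 - 4 * A := Real.sq_sqrt h4A.le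
  have hspos : 0 < s := Real.sqrt_pos.mpr h4A
  set f : Fin d → ℝ → ℝ := fun i t =>
    s * Real.exp (2 * A * t ^ 2 + s * x i * t + s * y i * t
      - x i ^ 2 / 2 - y i ^ 2 / 2) with hfdef
  have hnorm : ∀ z : EuclideanSpace ℝ (Fin d), ‖z‖ ^ 2 = ∑ i, z i ^ 2 := by
    intro z
    rw [← real_inner_self_eq_norm_sq, PiLp.inner_apply]
    simp [sq, RCLike.inner_apply]
  have hinner : ∀ z w : EuclideanSpace ℝ (Fin d), ⟪z, w⟫ = ∑ i, z i * w i := by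
    intro z w
    rw [PiLp.inner_apply]
    simp [RCLike.inner_apply]
    exact Finset.sum_congr rfl fun i _ => mul_comm _ _
  have key : ∀ g : EuclideanSpace ℝ (Fin d),
      lambdaRF d A g x * lambdaRF d A g y = ∏ i, f i (g i) := by
    intro g
    have hexp : (A * ‖g‖ ^ 2 + s * ⟪g, x⟫ - ‖x‖ ^ 2 / 2)
        + (A * ‖g‖ ^ 2 + s * ⟪g, y⟫ - ‖y‖ ^ 2 / 2)
        = ∑ i, (2 * A * (g i) ^ 2 + s * x i * (g i) + s * y i * (g i)
          - x i ^ 2 / 2 - y i ^ 2 / 2) := by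
      rw [hnorm g, hnorm x, hnorm y, hinner g x, hinner g y,
        Finset.mul_sum, Finset.mul_sum, Finset.mul_sum,
        Finset.sum_div, Finset.sum_div]
      simp only [← Finset.sum_add_distrib, ← Finset.sum_sub_distrib]
      exact Finset.sum_congr rfl fun i _ => by ring
    have hconst : (1 - 4 * A) ^ ((d : ℝ) / 4) * (1 - 4 * A) ^ ((d : ℝ) / 4)
        = s ^ d := by
      rw [← Real.rpow_add h4A, hsdef, Real.sqrt_eq_rpow,
        ← Real.rpow_natCast ((1 - 4 * A) ^ ((1:ℝ)/2)) d, ← Real.rpow_mul h4A.le]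
      congr 1
      ring
    simp only [lambdaRF, hfdef]
    rw [Finset.prod_mul_distrib, Finset.prod_const, Finset.card_univ,
      Fintype.card_fin, ← Real.exp_sum, ← hexp, ← hconst]
    rw [Real.exp_add]
    ring
  simp_rw [key]
  have piStep : ∫ g : EuclideanSpace ℝ (Fin d), ∏ i, f i (g i) ∂(stdGaussian d)
      = ∏ i, ∫ t, f i t ∂(gaussianReal 0 1) := by
    letI : MeasureSpace ℝ := ⟨gaussianReal 0 1⟩
    haveI : SigmaFinite (volume : Measure ℝ) :=
      inferInstanceAs (SigmaFinite (gaussianReal 0 1))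
    rw [_root_.stdGaussian, integral_map_equiv]
    exact MeasureTheory.integral_fintype_prod_eq_prod (E := fun _ => ℝ) f (μ := fun _ => gaussianReal 0 1)
  rw [piStep]
  have hcoord : ∀ i, ∫ t, f i t ∂(gaussianReal 0 1) = Real.exp (x i * y i) := by
    intro i
    have hrw : ∀ t : ℝ, f i t = (s * Real.exp (- x i ^ 2 / 2 - y i ^ 2 / 2))
        * Real.exp (2 * A * t ^ 2 + (s * (x i + y i)) * t) := by
      intro t
      simp only [hfdef]
      rw [show 2 * A * t ^ 2 + s * x i * t + s * y i * t - x i ^ 2 / 2 - y i ^ 2 / 2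
        = (- x i ^ 2 / 2 - y i ^ 2 / 2) + (2 * A * t ^ 2 + (s * (x i + y i)) * t) by ring,
        Real.exp_add]
      ring
    simp_rw [hrw]
    rw [integral_const_mul, gauss1d (by linarith : 2 * A ≤ 0) (s * (x i + y i))]
    have h1 : (1:ℝ) - 2 * (2 * A) = 1 - 4 * A := by ring
    rw [h1, ← hsdef]
    have h2 : (s * (x i + y i)) ^ 2 / (2 * (1 - 4 * A)) = (x i + y i) ^ 2 / 2 := by
      rw [mul_pow, hs2]
      field_simp
    rw [h2, mul_mul_mul_comm, mul_inv_cancel₀ (ne_of_gt hspos), one_mul,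
      ← Real.exp_add]
    congr 1
    ring
  simp_rw [hcoord]
  rw [← Real.exp_sum, hinner]
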